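/- For every signed permutation w in the hyperoctahedral group S^B_n, the cost of w equals half of its total displacement: $(w) = tvd(w)/2. -/

import Mathlib

/-- A signed permutation in the hyperoctahedral group `S^B_n`: a bijection of `ℤ`
that satisfies `w(i) = −w(−i)` and fixes every integer outside `{±1,…,±n}`
(this models the bijections of `{±1,…,±n}` with that symmetry). -/
def IsSignedPerm (n : ℕ) (w : Equiv.Perm ℤ) : Prop :=
  (∀ i : ℤ, w (-i) = - w i) ∧ (∀ i : ℤ, (n : ℤ) < |i| → w i = i)

/-- Total displacement: `tvd(w) = ∑_{i=1}^n |w(i) − i|`. -/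
noncomputable def tvdB (n : ℕ) (w : Equiv.Perm ℤ) : ℕ :=
  ∑ i ∈ Finset.Icc (1 : ℤ) (n : ℤ), (w i - i).natAbs

/-- `t` is a transposition of `S^B_n` of cost `c`: either `t = (i j)(−i −j)` for distinct
`i, j ∈ {±1,…,±n}` with `j ≠ −i`, of cost `|i − j|`; or `t = (i −i)` for
`i ∈ {±1,…,±n}`, of cost `|i|`. -/
def IsBTransp (n : ℕ) (t : Equiv.Perm ℤ) (c : ℕ) : Prop :=
  (∃ i j : ℤ, i ≠ 0 ∧ j ≠ 0 ∧ |i| ≤ (n : ℤ) ∧ |j| ≤ (n : ℤ) ∧ i ≠ j ∧ j ≠ -i ∧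
    t = Equiv.swap i j * Equiv.swap (-i) (-j) ∧ c = (i - j).natAbs) ∨
  (∃ i : ℤ, i ≠ 0 ∧ |i| ≤ (n : ℤ) ∧ t = Equiv.swap i (-i) ∧ c = i.natAbs)

/-- The cost of `w ∈ S^B_n`: the minimum of `$(t₁) + ⋯ + $(t_k)` over all factorizations
`w = t₁ ⋯ t_k` into transpositions of `S^B_n`. -/
noncomputable def costB (n : ℕ) (w : Equiv.Perm ℤ) : ℕ :=
  sInf {c : ℕ | ∃ L : List (Equiv.Perm ℤ × ℕ),
    (∀ p ∈ L, IsBTransp n p.1 p.2) ∧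
    (L.map Prod.fst).prod = w ∧ c = (L.map Prod.snd).sum}

open Equiv Finset

lemma pairSwap_apply (a b x : ℤ) (ha : a ≠ 0) (hb : b ≠ 0) (hab : a ≠ b) (hnab : b ≠ -a) :
    (Equiv.swap a b * Equiv.swap (-a) (-b)) x =
      if x = a then b else if x = b then a else if x = -a then -b else if x = -b then -a else x := by
  simp only [Equiv.Perm.mul_apply, Equiv.swap_apply_def]
  split_ifs <;> omega

lemma negSwap_apply (a x : ℤ) :
    (Equiv.swap a (-a)) x = if x = a then -a else if x = -a then a else x := by
  simp only [Equiv.swap_apply_def]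

lemma btransp_fix {n : ℕ} {t : Equiv.Perm ℤ} {c : ℕ} (h : IsBTransp n t c)
    {x : ℤ} (hx : (n:ℤ) < |x|) : t x = x := by
  rcases h with ⟨a, b, ha, hb, han, hbn, hab, hnab, ht, -⟩ | ⟨a, ha, han, ht, -⟩
  · rw [ht, pairSwap_apply a b x ha hb hab hnab]
    rw [abs_le] at han hbn; rw [lt_abs] at hx
    split_ifs <;> omega
  · rw [ht, negSwap_apply]
    rw [abs_le] at han; rw [lt_abs] at hx
    split_ifs <;> omega

lemma btransp_neg {n : ℕ} {t : Equiv.Perm ℤ} {c : ℕ} (h : IsBTransp n t c)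
    (x : ℤ) : t (-x) = - t x := by
  rcases h with ⟨a, b, ha, hb, han, hbn, hab, hnab, ht, -⟩ | ⟨a, ha, han, ht, -⟩
  · rw [ht, pairSwap_apply a b _ ha hb hab hnab, pairSwap_apply a b _ ha hb hab hnab]
    split_ifs <;> omega
  · rw [ht, negSwap_apply, negSwap_apply]
    split_ifs <;> omega

lemma signed_mul_transp {n : ℕ} {w t : Equiv.Perm ℤ} {c : ℕ}
    (hw : IsSignedPerm n w) (ht : IsBTransp n t c) : IsSignedPerm n (w * t) := by
  constructor
  · intro i
    rw [Equiv.Perm.mul_apply, Equiv.Perm.mul_apply, btransp_neg ht, hw.1]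
  · intro i hi
    rw [Equiv.Perm.mul_apply, btransp_fix ht hi, hw.2 i hi]

lemma btransp_sq {n : ℕ} {t : Equiv.Perm ℤ} {c : ℕ} (h : IsBTransp n t c) :
    t * t = 1 := by
  rcases h with ⟨a, b, ha, hb, han, hbn, hab, hnab, ht, -⟩ | ⟨a, ha, han, ht, -⟩
  · ext x
    rw [ht, Equiv.Perm.mul_apply, pairSwap_apply a b _ ha hb hab hnab,
      pairSwap_apply a b _ ha hb hab hnab, Equiv.Perm.one_apply]
    split_ifs <;> omega
  · ext x
    rw [ht, Equiv.Perm.mul_apply, negSwap_apply, negSwap_apply, Equiv.Perm.one_apply]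
    split_ifs <;> omega

noncomputable def FB (n : ℕ) (w : Equiv.Perm ℤ) : ℕ :=
  ∑ i ∈ Finset.Icc (-(n:ℤ)) (n:ℤ), (w i - i).natAbs

lemma tvdB_one (n : ℕ) : tvdB n 1 = 0 := by
  apply Finset.sum_eq_zero
  intro i _
  simp

lemma FB_subadd (n : ℕ) (u v : Equiv.Perm ℤ)
    (hu : ∀ x : ℤ, (n:ℤ) < |x| → u x = x) (hv : ∀ x : ℤ, (n:ℤ) < |x| → v x = x) :
    FB n (u * v) ≤ FB n u + FB n v := by
  have hreindex : ∑ x ∈ Finset.Icc (-(n:ℤ)) (n:ℤ), (u (v x) - v x).natAbs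
      = ∑ x ∈ Finset.Icc (-(n:ℤ)) (n:ℤ), (u x - x).natAbs := by
    exact Equiv.Perm.sum_comp v _ (fun j => (u j - j).natAbs)
      (fun x hx => by
        simp only [Finset.coe_Icc, Set.mem_Icc]
        by_contra hc
        exact hx (hv x (by rw [lt_abs]; push_neg at hc; omega)))
  calc FB n (u * v) ≤ ∑ x ∈ Finset.Icc (-(n:ℤ)) (n:ℤ),
        ((u (v x) - v x).natAbs + (v x - x).natAbs) := by
        apply Finset.sum_le_sum
        intro i _
        have : u (v i) - i = (u (v i) - v i) + (v i - i) := by ring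
        rw [Equiv.Perm.mul_apply, this]
        exact Int.natAbs_add_le _ _
    _ = FB n u + FB n v := by
        rw [Finset.sum_add_distrib, hreindex]; rfl

lemma FB_transp {n : ℕ} {t : Equiv.Perm ℤ} {c : ℕ} (h : IsBTransp n t c) :
    FB n t = 4 * c := by
  rcases h with ⟨a, b, ha, hb, han, hbn, hab, hnab, ht, hc⟩ | ⟨a, ha, han, ht, hc⟩
  · have heval : ∀ x, t x = if x = a then b else if x = b then a else if x = -a then -b
        else if x = -b then -a else x := fun x => by
      rw [ht]; exact pairSwap_apply a b x ha hb hab hnab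
    have hsub : ({a, b, -a, -b} : Finset ℤ) ⊆ Finset.Icc (-(n:ℤ)) (n:ℤ) := by
      intro x hx
      simp only [Finset.mem_insert, Finset.mem_singleton] at hx
      rw [abs_le] at han hbn
      simp only [Finset.mem_Icc]
      rcases hx with h|h|h|h <;> omega
    have h0 : ∀ x ∈ Finset.Icc (-(n:ℤ)) (n:ℤ), x ∉ ({a, b, -a, -b} : Finset ℤ) →
        (t x - x).natAbs = 0 := by
      intro x _ hx
      simp only [Finset.mem_insert, Finset.mem_singleton] at hx
      push_neg at hx
      rw [heval]
      split_ifs <;> omega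
    have va : t a = b := by rw [heval]; split_ifs <;> omega
    have vb : t b = a := by rw [heval]; split_ifs <;> omega
    have vna : t (-a) = -b := by rw [heval]; split_ifs <;> omega
    have vnb : t (-b) = -a := by rw [heval]; split_ifs <;> omega
    rw [FB, ← Finset.sum_subset hsub h0]
    have e1 : ({a, b, -a, -b} : Finset ℤ) = insert a (insert b (insert (-a) {-b})) := rfl
    rw [e1, Finset.sum_insert (by simp only [Finset.mem_insert, Finset.mem_singleton]; push_neg; omega),
      Finset.sum_insert (by simp only [Finset.mem_insert, Finset.mem_singleton]; push_neg; omega),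
      Finset.sum_insert (by simp only [Finset.mem_singleton]; omega),
      Finset.sum_singleton, va, vb, vna, vnb]
    omega
  · have heval : ∀ x, t x = if x = a then -a else if x = -a then a else x := fun x => by
      rw [ht]; exact negSwap_apply a x
    have hsub : ({a, -a} : Finset ℤ) ⊆ Finset.Icc (-(n:ℤ)) (n:ℤ) := by
      intro x hx
      simp only [Finset.mem_insert, Finset.mem_singleton] at hx
      rw [abs_le] at han
      simp only [Finset.mem_Icc]
      rcases hx with h|h <;> omega
    have h0 : ∀ x ∈ Finset.Icc (-(n:ℤ)) (n:ℤ), x ∉ ({a, -a} : Finset ℤ) →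
        (t x - x).natAbs = 0 := by
      intro x _ hx
      simp only [Finset.mem_insert, Finset.mem_singleton] at hx
      push_neg at hx
      rw [heval]
      split_ifs <;> omega
    have va : t a = -a := by rw [heval]; split_ifs <;> omega
    have vna : t (-a) = a := by rw [heval]; split_ifs <;> omega
    rw [FB, ← Finset.sum_subset hsub h0]
    have e1 : ({a, -a} : Finset ℤ) = insert a ({-a} : Finset ℤ) := rfl
    rw [e1, Finset.sum_insert (by simp only [Finset.mem_singleton]; omega),
      Finset.sum_singleton, va, vna]
    omega

lemma FB_eq_two_tvdB (n : ℕ) (w : Equiv.Perm ℤ) (hw : IsSignedPerm n w) :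
    FB n w = 2 * tvdB n w := by
  have w0 : w 0 = 0 := by have := hw.1 0; rw [neg_zero] at this; omega
  have hsplit : Finset.Icc (-(n:ℤ)) (n:ℤ)
      = (Finset.Icc (-(n:ℤ)) (-1) ∪ Finset.Icc (0:ℤ) 0) ∪ Finset.Icc (1:ℤ) (n:ℤ) := by
    ext x; simp only [Finset.mem_Icc, Finset.mem_union]; omega
  have hd1 : Disjoint (Finset.Icc (-(n:ℤ)) (-1)) (Finset.Icc (0:ℤ) 0) := by
    rw [Finset.disjoint_left]; intro x hx hx'
    simp only [Finset.mem_Icc] at hx hx'; omega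
  have hd2 : Disjoint (Finset.Icc (-(n:ℤ)) (-1) ∪ Finset.Icc (0:ℤ) 0) (Finset.Icc (1:ℤ) (n:ℤ)) := by
    rw [Finset.disjoint_left]; intro x hx hx'
    simp only [Finset.mem_Icc, Finset.mem_union] at hx hx'; omega
  have hneg : ∑ i ∈ Finset.Icc (-(n:ℤ)) (-1), (w i - i).natAbs
      = ∑ i ∈ Finset.Icc (1:ℤ) (n:ℤ), (w i - i).natAbs := by
    apply Finset.sum_nbij' (fun a => -a) (fun a => -a)
    · intro a ha; simp only [Finset.mem_Icc] at *; omega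
    · intro a ha; simp only [Finset.mem_Icc] at *; omega
    · intro a _; ring
    · intro a _; ring
    · intro a _
      rw [hw.1 a]
      omega
  rw [FB, hsplit, Finset.sum_union hd2, Finset.sum_union hd1, hneg]
  simp only [Finset.Icc_self, Finset.sum_singleton, w0]
  rw [tvdB]; omega

lemma eq_one_of_no_move (n : ℕ) (w : Equiv.Perm ℤ) (hw : IsSignedPerm n w)
    (h3 : ∀ i : ℤ, 1 ≤ i → i ≤ (n:ℤ) → ¬ (w i ≤ -i))
    (h2 : ∀ a b : ℤ, 1 ≤ a → a < b → b ≤ (n:ℤ) → ¬(b ≤ w a ∧ w b ≤ a)) : w = 1 := by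
  have w0 : w 0 = 0 := by have := hw.1 0; rw [neg_zero] at this; omega
  have hbnd : ∀ x : ℤ, |x| ≤ (n:ℤ) → |w x| ≤ (n:ℤ) := by
    intro x hx
    by_contra hc
    push_neg at hc
    have h1 := hw.2 (w x) hc
    have h2 := w.injective h1
    rw [h2] at hc
    omega
  have hge : ∀ k : ℕ, ∀ i : ℤ, 1 ≤ i → i ≤ (n:ℤ) → i ≤ (k:ℤ) → i ≤ w i := by
    intro k
    induction k with
    | zero => intro i h1 _ hk; omega
    | succ k ih =>
      intro i h1 hn hk
      by_cases hik : i ≤ (k:ℤ)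
      · exact ih i h1 hn hik
      by_contra hlt
      push_neg at hlt
      have hv0 : w i ≠ 0 := by
        intro h0
        have : w i = w 0 := by rw [h0, w0]
        have := w.injective this
        omega
      have hvge : -i < w i := by have := h3 i h1 hn; omega
      set v := w i with hv
      set lo := max v 1 with hlo
      have hJ : ∀ a, lo ≤ a → a ≤ i - 1 → lo ≤ w a ∧ w a ≤ i - 1 := by
        intro a ha1 ha2
        have h1a : 1 ≤ a := le_trans (le_max_right _ _) ha1
        have hwa : a ≤ w a := ih a h1a (by omega) (by omega)
        have hva : v ≤ a := le_trans (le_trans (le_max_left _ _) ha1) (le_refl a)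
        have hub : w a ≤ i - 1 := by
          by_contra hc
          push_neg at hc
          exact h2 a i h1a (by omega) hn ⟨by omega, by omega⟩
        exact ⟨by omega, hub⟩
      have himg : Finset.image (fun a => w a) (Finset.Icc lo (i-1)) = Finset.Icc lo (i-1) := by
        apply Finset.eq_of_subset_of_card_le
        · intro y hy
          simp only [Finset.mem_image, Finset.mem_Icc] at *
          obtain ⟨a, ⟨ha1, ha2⟩, rfl⟩ := hy
          exact hJ a ha1 ha2
        · rw [Finset.card_image_of_injective _ w.injective]
      rcases le_or_gt 1 v with hvpos | hvneg
      · have hvmem : v ∈ Finset.Icc lo (i-1) := by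
          simp only [Finset.mem_Icc]
          omega
        rw [← himg] at hvmem
        obtain ⟨a, ha, hwa⟩ := Finset.mem_image.mp hvmem
        have : a = i := w.injective (by rw [hwa])
        simp only [Finset.mem_Icc] at ha
        omega
      · have hvneg' : v ≤ -1 := by omega
        have hmmem : -v ∈ Finset.Icc lo (i-1) := by
          simp only [Finset.mem_Icc]
          omega
        rw [← himg] at hmmem
        obtain ⟨a, ha, hwa⟩ := Finset.mem_image.mp hmmem
        have hni : w (-i) = -v := by rw [hw.1 i]
        have : a = -i := w.injective (by rw [hwa, hni])
        simp only [Finset.mem_Icc] at ha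
        omega
  have hfix : ∀ i ∈ Finset.Icc (1:ℤ) (n:ℤ), w i = i := by
    have himg2 : Finset.image (fun a => w a) (Finset.Icc (1:ℤ) (n:ℤ)) = Finset.Icc (1:ℤ) (n:ℤ) := by
      apply Finset.eq_of_subset_of_card_le
      · intro y hy
        simp only [Finset.mem_image, Finset.mem_Icc] at *
        obtain ⟨a, ⟨ha1, ha2⟩, rfl⟩ := hy
        have hga := hge n a ha1 ha2 ha2
        have := hbnd a (by rw [abs_le]; omega)
        rw [abs_le] at this
        omega
      · rw [Finset.card_image_of_injective _ w.injective]
    have hsum : ∑ i ∈ Finset.Icc (1:ℤ) (n:ℤ), (w i - i) = 0 := by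
      rw [Finset.sum_sub_distrib]
      have : ∑ i ∈ Finset.Icc (1:ℤ) (n:ℤ), w i
          = ∑ y ∈ Finset.image (fun a => w a) (Finset.Icc (1:ℤ) (n:ℤ)), y := by
        rw [Finset.sum_image (fun x _ y _ h => w.injective h)]
      rw [this, himg2, sub_self]
    have hnn : ∀ i ∈ Finset.Icc (1:ℤ) (n:ℤ), 0 ≤ w i - i := by
      intro i hi
      simp only [Finset.mem_Icc] at hi
      have := hge n i hi.1 hi.2 hi.2
      omega
    intro i hi
    have := (Finset.sum_eq_zero_iff_of_nonneg hnn).mp hsum i hi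
    omega
  ext x
  simp only [Equiv.Perm.one_apply]
  rcases lt_or_ge (n:ℤ) |x| with hx | hx
  · exact hw.2 x hx
  rw [abs_le] at hx
  rcases lt_trichotomy x 0 with hneg | rfl | hpos
  · have hmx : w (-(-x)) = - w (-x) := hw.1 (-x)
    rw [neg_neg] at hmx
    rw [hmx, hfix (-x) (by simp only [Finset.mem_Icc]; omega), neg_neg]
  · exact w0
  · exact hfix x (by simp only [Finset.mem_Icc]; omega)

lemma exists_move (n : ℕ) (w : Equiv.Perm ℤ) (hw : IsSignedPerm n w) (hne : w ≠ 1) :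
    ∃ t c, IsBTransp n t c ∧ 0 < c ∧ IsSignedPerm n (w * t) ∧
      tvdB n (w * t) + 2 * c = tvdB n w := by
  by_cases hc3 : ∃ i : ℤ, 1 ≤ i ∧ i ≤ (n:ℤ) ∧ w i ≤ -i
  · obtain ⟨i, h1, hn, hwi⟩ := hc3
    have hi0 : i ≠ 0 := by omega
    refine ⟨Equiv.swap i (-i), i.natAbs, Or.inr ⟨i, hi0, by rw [abs_le]; omega, rfl, rfl⟩, by omega,
      signed_mul_transp hw (Or.inr ⟨i, hi0, by rw [abs_le]; omega, rfl, rfl⟩), ?_⟩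
    have hmem : i ∈ Finset.Icc (1:ℤ) (n:ℤ) := by simp only [Finset.mem_Icc]; omega
    have e1 : tvdB n (w * Equiv.swap i (-i))
        = ((w * Equiv.swap i (-i)) i - i).natAbs
          + ∑ x ∈ (Finset.Icc (1:ℤ) (n:ℤ)).erase i, ((w * Equiv.swap i (-i)) x - x).natAbs :=
      (Finset.add_sum_erase _ _ hmem).symm
    have e2 : tvdB n w
        = (w i - i).natAbs + ∑ x ∈ (Finset.Icc (1:ℤ) (n:ℤ)).erase i, (w x - x).natAbs :=
      (Finset.add_sum_erase _ _ hmem).symm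
    have e3 : ∑ x ∈ (Finset.Icc (1:ℤ) (n:ℤ)).erase i, ((w * Equiv.swap i (-i)) x - x).natAbs
        = ∑ x ∈ (Finset.Icc (1:ℤ) (n:ℤ)).erase i, (w x - x).natAbs := by
      apply Finset.sum_congr rfl
      intro x hx
      simp only [Finset.mem_erase, Finset.mem_Icc] at hx
      rw [Equiv.Perm.mul_apply, negSwap_apply, if_neg hx.1, if_neg (by omega)]
    have e4 : (w * Equiv.swap i (-i)) i = - w i := by
      rw [Equiv.Perm.mul_apply, negSwap_apply, if_pos rfl, hw.1]
    rw [e1, e2, e3, e4]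
    omega
  · by_cases hc2 : ∃ a b : ℤ, 1 ≤ a ∧ a < b ∧ b ≤ (n:ℤ) ∧ b ≤ w a ∧ w b ≤ a
    · obtain ⟨a, b, h1, hab, hbn, hwa, hwb⟩ := hc2
      have ha0 : a ≠ 0 := by omega
      have hb0 : b ≠ 0 := by omega
      have habs : |a| ≤ (n:ℤ) := by rw [abs_le]; omega
      have hbbs : |b| ≤ (n:ℤ) := by rw [abs_le]; omega
      have htr : IsBTransp n (Equiv.swap a b * Equiv.swap (-a) (-b)) ((a-b).natAbs) :=
        Or.inl ⟨a, b, ha0, hb0, habs, hbbs, by omega, by omega, rfl, rfl⟩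
      refine ⟨_, _, htr, by omega, signed_mul_transp hw htr, ?_⟩
      set t := Equiv.swap a b * Equiv.swap (-a) (-b) with hts
      have heval : ∀ x, t x = if x = a then b else if x = b then a else if x = -a then -b
          else if x = -b then -a else x := fun x => pairSwap_apply a b x ha0 hb0 (by omega) (by omega)
      have hmema : a ∈ Finset.Icc (1:ℤ) (n:ℤ) := by simp only [Finset.mem_Icc]; omega
      have hmemb : b ∈ (Finset.Icc (1:ℤ) (n:ℤ)).erase a := by
        simp only [Finset.mem_erase, Finset.mem_Icc]; omega
      have e1 : ∀ u : Equiv.Perm ℤ, ∑ x ∈ Finset.Icc (1:ℤ) (n:ℤ), (u x - x).natAbs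
          = (u a - a).natAbs + ((u b - b).natAbs
            + ∑ x ∈ ((Finset.Icc (1:ℤ) (n:ℤ)).erase a).erase b, (u x - x).natAbs) := by
        intro u
        rw [← Finset.add_sum_erase _ _ hmema, ← Finset.add_sum_erase _ _ hmemb]
      have e3 : ∑ x ∈ ((Finset.Icc (1:ℤ) (n:ℤ)).erase a).erase b, ((w * t) x - x).natAbs
          = ∑ x ∈ ((Finset.Icc (1:ℤ) (n:ℤ)).erase a).erase b, (w x - x).natAbs := by
        apply Finset.sum_congr rfl
        intro x hx
        simp only [Finset.mem_erase, Finset.mem_Icc] at hx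
        rw [Equiv.Perm.mul_apply, heval, if_neg hx.2.1, if_neg hx.1, if_neg (by omega),
          if_neg (by omega)]
      have e4 : (w * t) a = w b := by
        rw [Equiv.Perm.mul_apply, heval, if_pos rfl]
      have e5 : (w * t) b = w a := by
        rw [Equiv.Perm.mul_apply, heval, if_neg (by omega), if_pos rfl]
      show tvdB n (w * t) + 2 * (a-b).natAbs = tvdB n w
      rw [tvdB, tvdB, e1 (w*t), e1 w, e3, e4, e5]
      omega
    · exfalso
      push_neg at hc3 hc2
      exact hne (eq_one_of_no_move n w hw (fun i hi hin hle => by have := hc3 i hi hin; omega)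
        (fun a b ha hab hbn hcon => by have := hc2 a b ha hab hbn hcon.1; omega))

lemma exists_list (n : ℕ) : ∀ N : ℕ, ∀ w : Equiv.Perm ℤ, tvdB n w = N → IsSignedPerm n w →
    ∃ L : List (Equiv.Perm ℤ × ℕ), (∀ p ∈ L, IsBTransp n p.1 p.2) ∧
      (L.map Prod.fst).prod = w ∧ 2 * (L.map Prod.snd).sum = tvdB n w := by
  intro N
  induction N using Nat.strong_induction_on with
  | _ N ih =>
    intro w hN hw
    by_cases hw1 : w = 1
    · exact ⟨[], by simp, by simp [hw1], by simp [hw1, tvdB_one]⟩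
    · obtain ⟨t, c, htr, hcpos, hsp, htv⟩ := exists_move n w hw hw1
      obtain ⟨L', hL'1, hL'2, hL'3⟩ := ih (tvdB n (w * t)) (by omega) (w * t) rfl hsp
      refine ⟨L' ++ [(t, c)], ?_, ?_, ?_⟩
      · intro p hp
        rcases List.mem_append.mp hp with h | h
        · exact hL'1 p h
        · simp only [List.mem_singleton] at h
          rw [h]
          exact htr
      · rw [List.map_append, List.prod_append, hL'2]
        simp only [List.map_cons, List.map_nil, List.prod_cons, List.prod_nil, mul_one]
        rw [mul_assoc, btransp_sq htr, mul_one]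
      · rw [List.map_append, List.sum_append]
        simp only [List.map_cons, List.map_nil, List.sum_cons, List.sum_nil, add_zero]
        omega

lemma prod_fix_and_bound (n : ℕ) (L : List (Equiv.Perm ℤ × ℕ))
    (hL : ∀ p ∈ L, IsBTransp n p.1 p.2) :
    (∀ x : ℤ, (n:ℤ) < |x| → (L.map Prod.fst).prod x = x) ∧
      FB n (L.map Prod.fst).prod ≤ 4 * (L.map Prod.snd).sum := by
  induction L with
  | nil =>
    constructor
    · intro x _; simp
    · simp [FB]
  | cons p L ih =>
    obtain ⟨ihfix, ihbd⟩ := ih (fun q hq => hL q (List.mem_cons_of_mem _ hq))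
    have hp := hL p List.mem_cons_self
    simp only [List.map_cons, List.prod_cons, List.sum_cons]
    constructor
    · intro x hx
      rw [Equiv.Perm.mul_apply, ihfix x hx, btransp_fix hp hx]
    · calc FB n (p.1 * (L.map Prod.fst).prod)
          ≤ FB n p.1 + FB n (L.map Prod.fst).prod :=
            FB_subadd n _ _ (fun x hx => btransp_fix hp hx) ihfix
        _ ≤ 4 * p.2 + 4 * (L.map Prod.snd).sum := by
            rw [FB_transp hp]; omega
        _ = 4 * (p.2 + (L.map Prod.snd).sum) := by ring

/-- For every signed permutation `w ∈ S^B_n`, the cost of `w` equals half of its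
total displacement: `$(w) = tvd(w)/2`. -/
theorem cost_eq_half_tvd_typeB (n : ℕ) (w : Equiv.Perm ℤ) (hw : IsSignedPerm n w) :
    2 * costB n w = tvdB n w := by
  obtain ⟨L, hL1, hL2, hL3⟩ := exists_list n (tvdB n w) w rfl hw
  have hmem : (L.map Prod.snd).sum ∈ {c : ℕ | ∃ L : List (Equiv.Perm ℤ × ℕ),
      (∀ p ∈ L, IsBTransp n p.1 p.2) ∧
      (L.map Prod.fst).prod = w ∧ c = (L.map Prod.snd).sum} := ⟨L, hL1, hL2, rfl⟩
  have hinf_le : costB n w ≤ (L.map Prod.snd).sum := Nat.sInf_le hmem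
  have hinf_mem := Nat.sInf_mem (Set.nonempty_of_mem hmem)
  obtain ⟨L₀, hL₀1, hL₀2, hL₀3⟩ := hinf_mem
  have hlower : tvdB n w ≤ 2 * costB n w := by
    have hb := (prod_fix_and_bound n L₀ hL₀1).2
    rw [hL₀2, FB_eq_two_tvdB n w hw] at hb
    rw [costB, hL₀3]
    omega
  omega
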